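/- Let P₁, P₂ ∈ ℤ[x] be nonzero polynomials and let H(·) denote the naive height (maximum absolute value of coefficients). Then there exist positive constants c₁(m,n), c₂(m,n) depending only on the degrees m = deg P₁, n = deg P₂ such that c₁ · H(P₁)·H(P₂) ≤ H(P₁·P₂) ≤ c₂ · H(P₁)·H(P₂). In particular, for P = P₁²·P₂ one has H(P) ≍ H(P₁)²·H(P₂). -/

import Mathlib

open Polynomial Finset


/-- The naive height of an integer polynomial: the maximum absolute value of its
coefficients, as a real number. -/
noncomputable def naiveHeight (P : Polynomial ℤ) : ℝ :=
  ((P.support.sup fun i => (P.coeff i).natAbs : ℕ) : ℝ)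

lemma nh_nonneg (P : Polynomial ℤ) : 0 ≤ naiveHeight P := Nat.cast_nonneg _

lemma abs_coeff_le (P : Polynomial ℤ) (i : ℕ) : |(P.coeff i : ℝ)| ≤ naiveHeight P := by
  by_cases h : i ∈ P.support
  · rw [show |(P.coeff i : ℝ)| = (((P.coeff i).natAbs : ℕ) : ℝ) by simp [Nat.cast_natAbs]]
    exact_mod_cast Nat.cast_le.mpr (Finset.le_sup (f := fun i => (P.coeff i).natAbs) h)
  · simp [Polynomial.notMem_support_iff.mp h, nh_nonneg]

lemma exists_coeff (P : Polynomial ℤ) :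
    ∃ k ≤ P.natDegree, naiveHeight P = |(P.coeff k : ℝ)| := by
  by_cases h : P = 0
  · exact ⟨0, Nat.zero_le _, by simp [h, naiveHeight]⟩
  · obtain ⟨k, hk, hsup⟩ := Finset.exists_mem_eq_sup P.support
      (Polynomial.nonempty_support_iff.mpr h) (fun i => (P.coeff i).natAbs)
    refine ⟨k, Polynomial.le_natDegree_of_mem_supp k hk, ?_⟩
    rw [naiveHeight, hsup]
    simp [Nat.cast_natAbs]

lemma nh_pos (P : Polynomial ℤ) (h : P ≠ 0) : 0 < naiveHeight P := by
  obtain ⟨i, hi⟩ := Polynomial.nonempty_support_iff.mpr h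
  have h1 : (1 : ℝ) ≤ |(P.coeff i : ℝ)| := by
    have : P.coeff i ≠ 0 := Polynomial.mem_support_iff.mp hi
    rw [← Int.cast_abs]
    exact_mod_cast Int.one_le_abs (by simpa using this)
  exact lt_of_lt_of_le one_pos (le_trans h1 (abs_coeff_le P i))



lemma coeff_mul_fin (P Q : Polynomial ℝ) (m n : ℕ) (hP : P.natDegree ≤ m)
    (hQ : Q.natDegree ≤ n) (k : ℕ) :
    (P * Q).coeff k =
      ∑ i : Fin (m+1), ∑ j : Fin (n+1),
        if (i : ℕ) + (j : ℕ) = k then P.coeff i * Q.coeff j else 0 := by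
  rw [Polynomial.coeff_mul]
  have hsub : (range (m+1) ×ˢ range (n+1)).filter (fun p => p.1 + p.2 = k)
      ⊆ antidiagonal k := by
    intro p hp
    rw [Finset.mem_filter] at hp
    exact Finset.HasAntidiagonal.mem_antidiagonal.mpr hp.2
  have h1 : ∀ p ∈ antidiagonal k,
      p ∉ (range (m+1) ×ˢ range (n+1)).filter (fun p => p.1 + p.2 = k) →
      P.coeff p.1 * Q.coeff p.2 = 0 := by
    intro p hp hnp
    rw [Finset.HasAntidiagonal.mem_antidiagonal] at hp
    rw [Finset.mem_filter, Finset.mem_product] at hnp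
    push_neg at hnp
    rcases Classical.em (p.1 ∈ range (m+1)) with h | h
    · rcases Classical.em (p.2 ∈ range (n+1)) with h' | h'
      · exact absurd hp (hnp ⟨h, h'⟩)
      · have : Q.natDegree < p.2 := lt_of_le_of_lt hQ (by simpa [Nat.lt_succ_iff, not_le] using h')
        rw [Polynomial.coeff_eq_zero_of_natDegree_lt this, mul_zero]
    · have : P.natDegree < p.1 := lt_of_le_of_lt hP (by simpa [Nat.lt_succ_iff, not_le] using h)
      rw [Polynomial.coeff_eq_zero_of_natDegree_lt this, zero_mul]
  rw [← Finset.sum_subset hsub h1, Finset.sum_filter, Finset.sum_product]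
  rw [← Fin.sum_univ_eq_sum_range (fun i => ∑ j ∈ range (n+1),
        if i + j = k then P.coeff i * Q.coeff j else 0) (m+1)]
  congr 1
  funext i
  rw [← Fin.sum_univ_eq_sum_range (fun j => if (i:ℕ) + j = k then P.coeff i * Q.coeff j else 0) (n+1)]



noncomputable def convFun (m n : ℕ) (x : (Fin (m+1) → ℝ) × (Fin (n+1) → ℝ)) :
    Fin (m+n+1) → ℝ :=
  fun k => ∑ i : Fin (m+1), ∑ j : Fin (n+1),
    if (i : ℕ) + (j : ℕ) = (k : ℕ) then x.1 i * x.2 j else 0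

lemma convFun_continuous (m n : ℕ) : Continuous (fun x => ‖convFun m n x‖) := by
  apply Continuous.norm
  apply continuous_pi
  intro k
  apply continuous_finset_sum
  intro i _
  apply continuous_finset_sum
  intro j _
  by_cases h : (i : ℕ) + (j : ℕ) = (k : ℕ) <;> simp only [h, if_true, if_false] <;> fun_prop

noncomputable def vecPoly (m : ℕ) (a : Fin (m+1) → ℝ) : Polynomial ℝ :=
  ∑ i : Fin (m+1), Polynomial.monomial (i : ℕ) (a i)

lemma vecPoly_coeff (m : ℕ) (a : Fin (m+1) → ℝ) (i : Fin (m+1)) :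
    (vecPoly m a).coeff i = a i := by
  rw [vecPoly, Polynomial.finset_sum_coeff]
  simp only [Polynomial.coeff_monomial]
  rw [Finset.sum_eq_single i]
  · simp
  · intro b _ hb
    simp [Fin.val_eq_val, hb]
  · simp
lemma vecPoly_coeff' (m : ℕ) (a : Fin (m+1) → ℝ) (l : ℕ) (h : l < m+1) :
    (vecPoly m a).coeff l = a ⟨l, h⟩ := vecPoly_coeff m a ⟨l, h⟩

lemma vecPoly_natDegree (m : ℕ) (a : Fin (m+1) → ℝ) : (vecPoly m a).natDegree ≤ m := by
  apply Polynomial.natDegree_sum_le_of_forall_le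
  intro i _
  exact le_trans (Polynomial.natDegree_monomial_le _) (Nat.lt_succ_iff.mp i.isLt)

lemma vecPoly_ne_zero (m : ℕ) (a : Fin (m+1) → ℝ) (ha : a ≠ 0) : vecPoly m a ≠ 0 := by
  obtain ⟨i, hi⟩ := Function.ne_iff.mp ha
  intro h
  apply hi
  have := vecPoly_coeff m a i
  rw [h] at this
  simpa using this.symm

lemma convFun_eq_coeff (m n : ℕ) (a : Fin (m+1) → ℝ) (b : Fin (n+1) → ℝ) (k : Fin (m+n+1)) :
    convFun m n (a, b) k = (vecPoly m a * vecPoly n b).coeff (k : ℕ) := by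
  rw [coeff_mul_fin _ _ m n (vecPoly_natDegree m a) (vecPoly_natDegree n b)]
  simp only [convFun, vecPoly_coeff]

lemma convFun_pos (m n : ℕ) (a : Fin (m+1) → ℝ) (b : Fin (n+1) → ℝ)
    (ha : a ≠ 0) (hb : b ≠ 0) : 0 < ‖convFun m n (a, b)‖ := by
  rw [norm_pos_iff]
  intro h
  have hmul : vecPoly m a * vecPoly n b ≠ 0 :=
    mul_ne_zero (vecPoly_ne_zero m a ha) (vecPoly_ne_zero n b hb)
  apply hmul
  ext l
  rw [Polynomial.coeff_zero]
  by_cases hl : l < m + n + 1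
  · have := congrFun h ⟨l, hl⟩
    rw [convFun_eq_coeff] at this
    simpa using this
  · apply Polynomial.coeff_eq_zero_of_natDegree_lt
    calc (vecPoly m a * vecPoly n b).natDegree ≤ m + n := by
          refine le_trans (Polynomial.natDegree_mul_le) ?_
          exact Nat.add_le_add (vecPoly_natDegree m a) (vecPoly_natDegree n b)
      _ < l := by omega

lemma exists_consts (m n : ℕ) : ∃ c C : ℝ, 0 < c ∧ 0 < C ∧
    ∀ a : Fin (m+1) → ℝ, ∀ b : Fin (n+1) → ℝ, ‖a‖ = 1 → ‖b‖ = 1 →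
      c ≤ ‖convFun m n (a, b)‖ ∧ ‖convFun m n (a, b)‖ ≤ C := by
  set S := (Metric.sphere (0 : Fin (m+1) → ℝ) 1) ×ˢ (Metric.sphere (0 : Fin (n+1) → ℝ) 1)
    with hS
  have hc : IsCompact S := (isCompact_sphere _ _).prod (isCompact_sphere _ _)
  have hne : S.Nonempty := by
    refine ⟨((fun _ => 1), (fun _ => 1)), ?_, ?_⟩ <;>
      simp [mem_sphere_iff_norm, pi_norm_const]
  obtain ⟨xmin, hxmin, hmin⟩ := hc.exists_isMinOn hne (convFun_continuous m n).continuousOn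
  obtain ⟨xmax, hxmax, hmax⟩ := hc.exists_isMaxOn hne (convFun_continuous m n).continuousOn
  have hx1 : xmin.1 ≠ 0 := by
    have := hxmin.1
    simp only [mem_sphere_iff_norm, sub_zero] at this
    intro h; rw [h] at this; simp at this
  have hx2 : xmin.2 ≠ 0 := by
    have := hxmin.2
    simp only [mem_sphere_iff_norm, sub_zero] at this
    intro h; rw [h] at this; simp at this
  refine ⟨‖convFun m n xmin‖, ‖convFun m n xmax‖, convFun_pos m n _ _ hx1 hx2, ?_, ?_⟩
  · exact lt_of_lt_of_le (convFun_pos m n _ _ hx1 hx2) (hmin hxmax)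
  · intro a b ha hb
    have hab : (a, b) ∈ S := by
      refine ⟨?_, ?_⟩ <;> simp [mem_sphere_iff_norm, ha, hb]
    exact ⟨hmin hab, hmax hab⟩

lemma gelfond (m n : ℕ) : ∃ c C : ℝ, 0 < c ∧ 0 < C ∧
    ∀ P Q : Polynomial ℤ, P ≠ 0 → Q ≠ 0 → P.natDegree ≤ m → Q.natDegree ≤ n →
      c * naiveHeight P * naiveHeight Q ≤ naiveHeight (P * Q) ∧
      naiveHeight (P * Q) ≤ C * naiveHeight P * naiveHeight Q := by
  obtain ⟨c, C, hc, hC, hcC⟩ := exists_consts m n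
  refine ⟨c, C, hc, hC, ?_⟩
  intro P Q hP hQ hPm hQn
  have h1 := nh_pos P hP
  have h2 := nh_pos Q hQ
  have h12 : 0 < naiveHeight P * naiveHeight Q := mul_pos h1 h2
  set a : Fin (m+1) → ℝ := fun i => (P.coeff i : ℝ) / naiveHeight P with ha
  set b : Fin (n+1) → ℝ := fun j => (Q.coeff j : ℝ) / naiveHeight Q with hb
  have hna : ‖a‖ = 1 := by
    apply le_antisymm
    · apply (pi_norm_le_iff_of_nonneg zero_le_one).mpr
      intro i
      rw [ha, Real.norm_eq_abs, abs_div, abs_of_pos h1, div_le_one h1]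
      exact abs_coeff_le P i
    · obtain ⟨k, hk, hkeq⟩ := exists_coeff P
      have hklt : k < m + 1 := Nat.lt_succ_of_le (le_trans hk hPm)
      calc (1:ℝ) = ‖a ⟨k, hklt⟩‖ := by
            rw [ha, Real.norm_eq_abs, abs_div, abs_of_pos h1, ← hkeq, div_self (ne_of_gt h1)]
        _ ≤ ‖a‖ := norm_le_pi_norm a _
  have hnb : ‖b‖ = 1 := by
    apply le_antisymm
    · apply (pi_norm_le_iff_of_nonneg zero_le_one).mpr
      intro j
      rw [hb, Real.norm_eq_abs, abs_div, abs_of_pos h2, div_le_one h2]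
      exact abs_coeff_le Q j
    · obtain ⟨k, hk, hkeq⟩ := exists_coeff Q
      have hklt : k < n + 1 := Nat.lt_succ_of_le (le_trans hk hQn)
      calc (1:ℝ) = ‖b ⟨k, hklt⟩‖ := by
            rw [hb, Real.norm_eq_abs, abs_div, abs_of_pos h2, ← hkeq, div_self (ne_of_gt h2)]
        _ ≤ ‖b‖ := norm_le_pi_norm b _
  have hP' : (P.map (Int.castRingHom ℝ)).natDegree ≤ m :=
    le_trans Polynomial.natDegree_map_le hPm
  have hQ' : (Q.map (Int.castRingHom ℝ)).natDegree ≤ n :=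
    le_trans Polynomial.natDegree_map_le hQn
  have key : ∀ k : Fin (m+n+1),
      convFun m n (a, b) k = ((P * Q).coeff k : ℝ) / (naiveHeight P * naiveHeight Q) := by
    intro k
    have hcast : ((P * Q).coeff k : ℝ) =
        (P.map (Int.castRingHom ℝ) * Q.map (Int.castRingHom ℝ)).coeff (k : ℕ) := by
      rw [← Polynomial.map_mul, Polynomial.coeff_map]
      simp
    rw [hcast, coeff_mul_fin _ _ m n hP' hQ' k, Finset.sum_div]
    apply Finset.sum_congr rfl
    intro i _
    rw [Finset.sum_div]
    apply Finset.sum_congr rfl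
    intro j _
    by_cases h : (i : ℕ) + (j : ℕ) = (k : ℕ)
    · simp only [convFun, h, if_true, ha, hb, Polynomial.coeff_map]
      rw [div_mul_div_comm]
      simp
    · simp [convFun, h]
  obtain ⟨hlow, hupp⟩ := hcC a b hna hnb
  constructor
  · have hnorm_le : ‖convFun m n (a, b)‖ ≤ naiveHeight (P * Q) / (naiveHeight P * naiveHeight Q) := by
      apply (pi_norm_le_iff_of_nonneg (div_nonneg (nh_nonneg _) (le_of_lt h12))).mpr
      intro k
      rw [key k, Real.norm_eq_abs, abs_div, abs_of_pos h12]
      gcongr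
      exact abs_coeff_le _ _
    have := le_trans hlow hnorm_le
    rw [le_div_iff₀ h12] at this
    linarith [this]
  · obtain ⟨k, hk, hkeq⟩ := exists_coeff (P * Q)
    have hdeg : (P * Q).natDegree ≤ m + n :=
      le_trans (Polynomial.natDegree_mul_le) (Nat.add_le_add hPm hQn)
    have hklt : k < m + n + 1 := Nat.lt_succ_of_le (le_trans hk hdeg)
    have habs : naiveHeight (P * Q) = |convFun m n (a, b) ⟨k, hklt⟩| * (naiveHeight P * naiveHeight Q) := by
      rw [key ⟨k, hklt⟩, abs_div, abs_of_pos h12, div_mul_cancel₀ _ (ne_of_gt h12)]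
      exact hkeq
    rw [habs]
    have h3 : |convFun m n (a, b) ⟨k, hklt⟩| ≤ C := by
      refine le_trans ?_ hupp
      rw [← Real.norm_eq_abs]
      exact norm_le_pi_norm (convFun m n (a, b)) _
    nlinarith [h3, h12, abs_nonneg (convFun m n (a, b) ⟨k, hklt⟩)]

/-- Gelfond's lemma: `H(P₁P₂) ≍ H(P₁)H(P₂)` with constants depending
only on the degrees; in particular `H(P₁²P₂) ≍ H(P₁)²H(P₂)`. -/

theorem stmt_18 (m n : ℕ) :
    ∃ c₁ c₂ c₃ c₄ : ℝ, 0 < c₁ ∧ 0 < c₂ ∧ 0 < c₃ ∧ 0 < c₄ ∧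
      ∀ P₁ P₂ : Polynomial ℤ, P₁ ≠ 0 → P₂ ≠ 0 →
        P₁.natDegree = m → P₂.natDegree = n →
        (c₁ * naiveHeight P₁ * naiveHeight P₂ ≤ naiveHeight (P₁ * P₂) ∧
          naiveHeight (P₁ * P₂) ≤ c₂ * naiveHeight P₁ * naiveHeight P₂) ∧
        (c₃ * naiveHeight P₁ ^ 2 * naiveHeight P₂ ≤ naiveHeight (P₁ ^ 2 * P₂) ∧
          naiveHeight (P₁ ^ 2 * P₂) ≤ c₄ * naiveHeight P₁ ^ 2 * naiveHeight P₂) := by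
  obtain ⟨c₁, c₂, hc₁, hc₂, h12⟩ := gelfond m n
  obtain ⟨c', C', hc', hC', h34⟩ := gelfond m (m + n)
  refine ⟨c₁, c₂, c' * c₁, C' * c₂, hc₁, hc₂, mul_pos hc' hc₁, mul_pos hC' hc₂, ?_⟩
  intro P₁ P₂ hP₁ hP₂ hdeg₁ hdeg₂
  have hPQ : P₁ * P₂ ≠ 0 := mul_ne_zero hP₁ hP₂
  have hdegPQ : (P₁ * P₂).natDegree ≤ m + n := by
    refine le_trans Polynomial.natDegree_mul_le ?_
    omega
  obtain ⟨hl1, hu1⟩ := h12 P₁ P₂ hP₁ hP₂ (le_of_eq hdeg₁) (le_of_eq hdeg₂)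
  obtain ⟨hl2, hu2⟩ := h34 P₁ (P₁ * P₂) hP₁ hPQ (le_of_eq hdeg₁) hdegPQ
  have hsq : P₁ ^ 2 * P₂ = P₁ * (P₁ * P₂) := by ring
  have hH₁ := nh_pos P₁ hP₁
  have hH₂ := nh_pos P₂ hP₂
  refine ⟨⟨hl1, hu1⟩, ?_, ?_⟩
  · rw [hsq]
    calc c' * c₁ * naiveHeight P₁ ^ 2 * naiveHeight P₂
        = c' * naiveHeight P₁ * (c₁ * naiveHeight P₁ * naiveHeight P₂) := by ring
      _ ≤ c' * naiveHeight P₁ * naiveHeight (P₁ * P₂) := by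
          apply mul_le_mul_of_nonneg_left hl1 (by positivity)
      _ ≤ naiveHeight (P₁ * (P₁ * P₂)) := hl2
  · rw [hsq]
    calc naiveHeight (P₁ * (P₁ * P₂))
        ≤ C' * naiveHeight P₁ * naiveHeight (P₁ * P₂) := hu2
      _ ≤ C' * naiveHeight P₁ * (c₂ * naiveHeight P₁ * naiveHeight P₂) := by
          apply mul_le_mul_of_nonneg_left hu1 (by positivity)
      _ = C' * c₂ * naiveHeight P₁ ^ 2 * naiveHeight P₂ := by ring
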